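/- Let G be a connected graph with n ≥ 2 vertices and m edges. For any new vertex i ∈ V′ and any original vertex j ∈ V, the resistance distance in the triangulation and that in the subdivision are related by Ω^T_{ij} = (1/3)·Ω^S_{ij} + 1/3. -/

import Mathlib

set_option linter.unusedSectionVars false
set_option maxHeartbeats 1000000


open BigOperators Matrix

namespace KirchhoffPaper

/-- `B` is a Moore–Penrose (pseudo)inverse of `A`. -/
def IsMoorePenrose {n : Type*} [Fintype n] [DecidableEq n] (A B : Matrix n n ℝ) : Prop :=
  A * B * A = A ∧ B * A * B = B ∧ (A * B)ᵀ = A * B ∧ (B * A)ᵀ = B * A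

variable {V : Type*}

/-- The resistance distance between `i` and `j` in `G`:
`Ω_{ij} = L⁺_{ii} + L⁺_{jj} - 2 L⁺_{ij}` with `L⁺` the Moore–Penrose inverse of the Laplacian. -/
noncomputable def resistanceDistance [Fintype V] [DecidableEq V]
    (G : SimpleGraph V) [DecidableRel G.Adj] (i j : V) : ℝ :=
  letI := Classical.propDecidable
  if h : ∃ B, IsMoorePenrose (G.lapMatrix ℝ) B then
    h.choose i i + h.choose j j - 2 * h.choose i j
  else 0

/-- Kirchhoff index `R(G) = Σ_{{i,j}⊆V} Ω_{ij}` (as half the sum over ordered pairs;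
note `Ω_{ii} = 0`). -/
noncomputable def kirchhoffIndex [Fintype V] [DecidableEq V]
    (G : SimpleGraph V) [DecidableRel G.Adj] : ℝ :=
  (1 / 2) * ∑ i, ∑ j, resistanceDistance G i j

/-- Additive degree-Kirchhoff index `R⁺(G) = Σ_{{i,j}⊆V} (d_i + d_j) Ω_{ij}`. -/
noncomputable def addDegKirchhoffIndex [Fintype V] [DecidableEq V]
    (G : SimpleGraph V) [DecidableRel G.Adj] : ℝ :=
  (1 / 2) * ∑ i, ∑ j, ((G.degree i : ℝ) + (G.degree j : ℝ)) * resistanceDistance G i j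

/-- Multiplicative degree-Kirchhoff index `R*(G) = Σ_{{i,j}⊆V} d_i d_j Ω_{ij}`. -/
noncomputable def mulDegKirchhoffIndex [Fintype V] [DecidableEq V]
    (G : SimpleGraph V) [DecidableRel G.Adj] : ℝ :=
  (1 / 2) * ∑ i, ∑ j, ((G.degree i : ℝ) * (G.degree j : ℝ)) * resistanceDistance G i j

section General

variable {W : Type*} [Fintype W] [DecidableEq W]

/-- all-ones matrix -/
def Jmat (W : Type*) : Matrix W W ℝ := Matrix.of fun _ _ => 1

lemma Jmat_mul_Jmat : Jmat W * Jmat W = (Fintype.card W : ℝ) • Jmat W := by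
  ext i j
  simp only [Jmat, Matrix.mul_apply, Matrix.of_apply, Matrix.smul_apply, smul_eq_mul, mul_one,
    Finset.sum_const, nsmul_eq_mul, Fintype.card]

lemma lap_mul_Jmat (H : SimpleGraph W) [DecidableRel H.Adj] :
    H.lapMatrix ℝ * Jmat W = 0 := by
  ext i j
  have h := congrFun (H.lapMatrix_mulVec_const_eq_zero (R := ℝ)) i
  simpa [Jmat, Matrix.mul_apply, Matrix.mulVec, dotProduct] using h

lemma Jmat_mul_lap (H : SimpleGraph W) [DecidableRel H.Adj] :
    Jmat W * H.lapMatrix ℝ = 0 := by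
  have h := congrArg Matrix.transpose (lap_mul_Jmat H)
  rw [Matrix.transpose_mul] at h
  have hL : (H.lapMatrix ℝ)ᵀ = H.lapMatrix ℝ := H.isSymm_lapMatrix (R := ℝ)
  have hJ : (Jmat W)ᵀ = Jmat W := by ext i j; simp [Jmat, Matrix.transpose_apply]
  rw [hL, hJ] at h
  simpa using h

/-- `L + (card W)⁻¹ J` -/
noncomputable def Mmat (H : SimpleGraph W) [DecidableRel H.Adj] : Matrix W W ℝ :=
  H.lapMatrix ℝ + ((Fintype.card W : ℝ))⁻¹ • Jmat W

lemma Mmat_transpose (H : SimpleGraph W) [DecidableRel H.Adj] :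
    (Mmat H)ᵀ = Mmat H := by
  have hL : (H.lapMatrix ℝ)ᵀ = H.lapMatrix ℝ := H.isSymm_lapMatrix (R := ℝ)
  have hJ : (Jmat W)ᵀ = Jmat W := by ext i j; simp [Jmat, Matrix.transpose_apply]
  simp [Mmat, Matrix.transpose_add, Matrix.transpose_smul, hL, hJ]

lemma Mmat_det_isUnit (H : SimpleGraph W) [DecidableRel H.Adj] (hconn : H.Connected) :
    IsUnit (Mmat H).det := by
  have hcard : 0 < Fintype.card W := @Fintype.card_pos _ _ hconn.nonempty
  by_contra h
  have hdet : (Mmat H).det = 0 := by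
    rwa [isUnit_iff_ne_zero, not_not] at h
  obtain ⟨x, hx0, hx⟩ := (Matrix.exists_mulVec_eq_zero_iff).2 hdet
  -- x ⬝ᵥ (M *ᵥ x) = 0
  have hdot : x ⬝ᵥ (Mmat H *ᵥ x) = 0 := by rw [hx, dotProduct_zero]
  have hexp : x ⬝ᵥ (Mmat H *ᵥ x)
      = x ⬝ᵥ (H.lapMatrix ℝ *ᵥ x) + ((Fintype.card W : ℝ))⁻¹ * (∑ i, x i) ^ 2 := by
    rw [Mmat, Matrix.add_mulVec, dotProduct_add, Matrix.smul_mulVec,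
      dotProduct_smul]
    congr 1
    have hJv : Jmat W *ᵥ x = fun _ => ∑ i, x i := by
      ext i; simp [Jmat, Matrix.mulVec, dotProduct]
    rw [hJv]
    simp only [dotProduct, smul_eq_mul, sq, Pi.smul_apply]
    rw [← Finset.sum_mul]
  have hpsd : 0 ≤ x ⬝ᵥ (H.lapMatrix ℝ *ᵥ x) := by
    have := (SimpleGraph.posSemidef_lapMatrix ℝ H).dotProduct_mulVec_nonneg x
    simpa using this
  have hsq : 0 ≤ ((Fintype.card W : ℝ))⁻¹ * (∑ i, x i) ^ 2 := by positivity
  rw [hexp] at hdot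
  have h1 : x ⬝ᵥ (H.lapMatrix ℝ *ᵥ x) = 0 := by linarith
  have h2 : ((Fintype.card W : ℝ))⁻¹ * (∑ i, x i) ^ 2 = 0 := by linarith
  -- x constant
  have hconst : ∀ i j : W, x i = x j := by
    have hz : Matrix.toLinearMap₂' ℝ (H.lapMatrix ℝ) x x = 0 := by
      rw [Matrix.toLinearMap₂'_apply']; exact h1
    rw [SimpleGraph.lapMatrix_toLinearMap₂'_apply'_eq_zero_iff_forall_reachable] at hz
    exact fun i j => hz i j (hconn.preconnected i j)
  obtain ⟨i0⟩ := hconn.nonempty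
  have hsum : ∑ i, x i = (Fintype.card W : ℝ) * x i0 := by
    rw [Finset.sum_congr rfl fun i _ => hconst i i0, Finset.sum_const, Fintype.card,
      nsmul_eq_mul]
  have hcne : (Fintype.card W : ℝ) ≠ 0 := by
    exact_mod_cast Nat.pos_iff_ne_zero.mp hcard
  have hcard' : ((Fintype.card W : ℝ))⁻¹ ≠ 0 := inv_ne_zero hcne
  have hs0 : (∑ i, x i) = 0 := by
    have := mul_eq_zero.mp h2
    rcases this with h | h
    · exact absurd h hcard'
    · exact pow_eq_zero_iff (two_ne_zero) |>.mp h
  have hx0' : x i0 = 0 := by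
    rw [hsum] at hs0
    rcases mul_eq_zero.mp hs0 with h | h
    · exact absurd h hcne
    · exact h
  exact hx0 (funext fun i => by rw [hconst i i0, hx0']; rfl)

variable (H : SimpleGraph W) [DecidableRel H.Adj]

lemma card_ne_zero (hconn : H.Connected) : (Fintype.card W : ℝ) ≠ 0 := by
  have : 0 < Fintype.card W := @Fintype.card_pos _ _ hconn.nonempty
  exact_mod_cast Nat.pos_iff_ne_zero.mp this

lemma Mmat_mul_Jmat (hconn : H.Connected) : Mmat H * Jmat W = Jmat W := by
  rw [Mmat, Matrix.add_mul, lap_mul_Jmat, Matrix.smul_mul, Jmat_mul_Jmat, smul_smul,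
    inv_mul_cancel₀ (card_ne_zero H hconn), one_smul, zero_add]

lemma Jmat_mul_Mmat (hconn : H.Connected) : Jmat W * Mmat H = Jmat W := by
  rw [Mmat, Matrix.mul_add, Jmat_mul_lap, Matrix.mul_smul, Jmat_mul_Jmat, smul_smul,
    inv_mul_cancel₀ (card_ne_zero H hconn), one_smul, zero_add]

lemma Minv_mul_Jmat (hconn : H.Connected) : (Mmat H)⁻¹ * Jmat W = Jmat W := by
  have hdet := Mmat_det_isUnit H hconn
  calc (Mmat H)⁻¹ * Jmat W = (Mmat H)⁻¹ * (Mmat H * Jmat W) := by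
        rw [Mmat_mul_Jmat H hconn]
    _ = Jmat W := by rw [← Matrix.mul_assoc, Matrix.nonsing_inv_mul _ hdet, Matrix.one_mul]

lemma Jmat_mul_Minv (hconn : H.Connected) : Jmat W * (Mmat H)⁻¹ = Jmat W := by
  have hdet := Mmat_det_isUnit H hconn
  calc Jmat W * (Mmat H)⁻¹ = (Jmat W * Mmat H) * (Mmat H)⁻¹ := by
        rw [Jmat_mul_Mmat H hconn]
    _ = Jmat W := by rw [Matrix.mul_assoc, Matrix.mul_nonsing_inv _ hdet, Matrix.mul_one]

lemma lap_mul_Minv (hconn : H.Connected) :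
    H.lapMatrix ℝ * (Mmat H)⁻¹ = 1 - ((Fintype.card W : ℝ))⁻¹ • Jmat W := by
  have hdet := Mmat_det_isUnit H hconn
  have : H.lapMatrix ℝ = Mmat H - ((Fintype.card W : ℝ))⁻¹ • Jmat W := by
    rw [Mmat, add_sub_cancel_right]
  rw [this, Matrix.sub_mul, Matrix.mul_nonsing_inv _ hdet, Matrix.smul_mul,
    Jmat_mul_Minv H hconn]

lemma Minv_mul_lap (hconn : H.Connected) :
    (Mmat H)⁻¹ * H.lapMatrix ℝ = 1 - ((Fintype.card W : ℝ))⁻¹ • Jmat W := by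
  have hdet := Mmat_det_isUnit H hconn
  have : H.lapMatrix ℝ = Mmat H - ((Fintype.card W : ℝ))⁻¹ • Jmat W := by
    rw [Mmat, add_sub_cancel_right]
  rw [this, Matrix.mul_sub, Matrix.nonsing_inv_mul _ hdet, Matrix.mul_smul,
    Minv_mul_Jmat H hconn]

/-- the canonical Moore-Penrose inverse of the Laplacian -/
noncomputable def pinv : Matrix W W ℝ :=
  (Mmat H)⁻¹ - ((Fintype.card W : ℝ))⁻¹ • Jmat W

lemma isMoorePenrose_pinv (hconn : H.Connected) :
    IsMoorePenrose (H.lapMatrix ℝ) (pinv H) := by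
  set c : ℝ := ((Fintype.card W : ℝ))⁻¹ with hc
  have hLN : H.lapMatrix ℝ * pinv H = 1 - c • Jmat W := by
    rw [pinv, Matrix.mul_sub, lap_mul_Minv H hconn, Matrix.mul_smul, lap_mul_Jmat,
      smul_zero, sub_zero]
  have hNL : pinv H * H.lapMatrix ℝ = 1 - c • Jmat W := by
    rw [pinv, Matrix.sub_mul, Minv_mul_lap H hconn, Matrix.smul_mul, Jmat_mul_lap,
      smul_zero, sub_zero]
  have hJsymm : (Jmat W)ᵀ = Jmat W := by ext i j; simp [Jmat]
  have hJN : Jmat W * pinv H = 0 := by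
    rw [pinv, Matrix.mul_sub, Jmat_mul_Minv H hconn, Matrix.mul_smul, Jmat_mul_Jmat,
      smul_smul, inv_mul_cancel₀ (card_ne_zero H hconn), one_smul, sub_self]
  refine ⟨?_, ?_, ?_, ?_⟩
  · rw [Matrix.mul_assoc, hNL, Matrix.mul_sub, Matrix.mul_one, Matrix.mul_smul,
      lap_mul_Jmat, smul_zero, sub_zero]
  · rw [hNL, Matrix.sub_mul, Matrix.one_mul, Matrix.smul_mul, hJN, smul_zero, sub_zero]
  · rw [hLN]; rw [Matrix.transpose_sub, Matrix.transpose_one, Matrix.transpose_smul, hJsymm]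
  · rw [hNL]; rw [Matrix.transpose_sub, Matrix.transpose_one, Matrix.transpose_smul, hJsymm]

lemma isMoorePenrose_unique {A B C : Matrix W W ℝ}
    (hB : IsMoorePenrose A B) (hC : IsMoorePenrose A C) : B = C := by
  obtain ⟨hB1, hB2, hB3, hB4⟩ := hB
  obtain ⟨hC1, hC2, hC3, hC4⟩ := hC
  have hAB : A * B = A * C := by
    calc A * B = (A * B)ᵀ := hB3.symm
      _ = Bᵀ * Aᵀ := Matrix.transpose_mul _ _
      _ = Bᵀ * (A * C * A)ᵀ := by rw [hC1]
      _ = Bᵀ * (Aᵀ * (A * C)ᵀ) := by rw [Matrix.transpose_mul (A * C) A]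
      _ = (Bᵀ * Aᵀ) * (A * C)ᵀ := by rw [Matrix.mul_assoc]
      _ = (A * B)ᵀ * (A * C)ᵀ := by rw [Matrix.transpose_mul A B]
      _ = (A * B) * (A * C) := by rw [hB3, hC3]
      _ = ((A * B) * A) * C := by simp only [Matrix.mul_assoc]
      _ = A * C := by rw [hB1]
  have hBA : B * A = C * A := by
    calc B * A = (B * A)ᵀ := hB4.symm
      _ = Aᵀ * Bᵀ := Matrix.transpose_mul _ _
      _ = (A * C * A)ᵀ * Bᵀ := by rw [hC1]
      _ = (A * (C * A))ᵀ * Bᵀ := by rw [Matrix.mul_assoc]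
      _ = ((C * A)ᵀ * Aᵀ) * Bᵀ := by rw [Matrix.transpose_mul A (C * A)]
      _ = (C * A)ᵀ * (Aᵀ * Bᵀ) := by rw [Matrix.mul_assoc]
      _ = (C * A)ᵀ * (B * A)ᵀ := by rw [Matrix.transpose_mul B A]
      _ = (C * A) * (B * A) := by rw [hB4, hC4]
      _ = C * (A * (B * A)) := by rw [Matrix.mul_assoc]
      _ = C * (A * B * A) := by rw [Matrix.mul_assoc]
      _ = C * A := by rw [hB1]
  calc B = B * A * B := hB2.symm
    _ = (C * A) * B := by rw [hBA]
    _ = C * (A * B) := by rw [Matrix.mul_assoc]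
    _ = C * (A * C) := by rw [hAB]
    _ = C * A * C := by rw [Matrix.mul_assoc]
    _ = C := hC2

lemma lapMatrix_congr {d1 d1' : DecidableRel H.Adj} {d2 d2' : DecidableEq W} :
    @SimpleGraph.lapMatrix W ℝ _ H d1 d2 _ = @SimpleGraph.lapMatrix W ℝ _ H d1' d2' _ := by
  cases Subsingleton.elim d1 d1'
  cases Subsingleton.elim d2 d2'
  rfl

lemma resistanceDistance_eq_of_mp (N : Matrix W W ℝ)
    (hN : IsMoorePenrose (H.lapMatrix ℝ) N) (i j : W) :
    resistanceDistance H i j = N i i + N j j - 2 * N i j := by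
  simp only [resistanceDistance]
  rw [lapMatrix_congr H (d1' := ‹DecidableRel H.Adj›) (d2' := ‹DecidableEq W›)]
  have hex : ∃ B, IsMoorePenrose (H.lapMatrix ℝ) B := ⟨N, hN⟩
  refine (dif_pos hex).trans ?_
  exact congrArg (fun B : Matrix W W ℝ => B i i + B j j - 2 * B i j)
    (isMoorePenrose_unique hex.choose_spec hN)

lemma resistanceDistance_eq (hconn : H.Connected) (i j : W) :
    resistanceDistance H i j
      = (Mmat H)⁻¹ i i + (Mmat H)⁻¹ j j - 2 * (Mmat H)⁻¹ i j := by
  rw [resistanceDistance_eq_of_mp H (pinv H) (isMoorePenrose_pinv H hconn)]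
  simp only [pinv, Matrix.sub_apply, Matrix.smul_apply, Jmat, Matrix.of_apply, smul_eq_mul,
    mul_one]
  ring

end General

/-- The subdivision `S(G)`: each edge of `G` is replaced by a path of length two through a
new vertex (one new vertex per edge of `G`). -/
def subdivision [DecidableEq V] (G : SimpleGraph V) : SimpleGraph (V ⊕ G.edgeSet) where
  Adj x y :=
    match x, y with
    | Sum.inl u, Sum.inr e => u ∈ (e : Sym2 V)
    | Sum.inr e, Sum.inl u => u ∈ (e : Sym2 V)
    | _, _ => False
  symm := ⟨by rintro (u | e) (v | f) h <;> exact h⟩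
  loopless := ⟨by rintro (u | e) h <;> exact h⟩

/-- The triangulation `T(G)`: each edge `uv` of `G` is turned into a triangle `uwv`
with `w` a new vertex associated with `uv`. -/
def triangulation [DecidableEq V] (G : SimpleGraph V) : SimpleGraph (V ⊕ G.edgeSet) where
  Adj x y :=
    match x, y with
    | Sum.inl u, Sum.inl v => G.Adj u v
    | Sum.inl u, Sum.inr e => u ∈ (e : Sym2 V)
    | Sum.inr e, Sum.inl u => u ∈ (e : Sym2 V)
    | _, _ => False
  symm := ⟨by
    rintro (u | e) (v | f) h
    · exact G.symm.symm _ _ h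
    · exact h
    · exact h
    · exact h⟩
  loopless := ⟨by
    rintro (u | e) h
    · exact G.loopless.irrefl u h
    · exact h⟩

instance [Fintype V] [DecidableEq V] (G : SimpleGraph V) [DecidableRel G.Adj] :
    DecidableRel (subdivision G).Adj := fun x y =>
  match x, y with
  | Sum.inl _, Sum.inl _ => inferInstanceAs (Decidable False)
  | Sum.inl u, Sum.inr e => inferInstanceAs (Decidable (u ∈ (e : Sym2 V)))
  | Sum.inr e, Sum.inl u => inferInstanceAs (Decidable (u ∈ (e : Sym2 V)))
  | Sum.inr _, Sum.inr _ => inferInstanceAs (Decidable False)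

instance [Fintype V] [DecidableEq V] (G : SimpleGraph V) [DecidableRel G.Adj] :
    DecidableRel (triangulation G).Adj := fun x y =>
  match x, y with
  | Sum.inl u, Sum.inl v => inferInstanceAs (Decidable (G.Adj u v))
  | Sum.inl u, Sum.inr e => inferInstanceAs (Decidable (u ∈ (e : Sym2 V)))
  | Sum.inr e, Sum.inl u => inferInstanceAs (Decidable (u ∈ (e : Sym2 V)))
  | Sum.inr _, Sum.inr _ => inferInstanceAs (Decidable False)


section GraphLemmas

variable {V : Type*} [DecidableEq V] (G : SimpleGraph V)

@[simp] lemma subdivision_adj_inl_inl (u v : V) :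
    (subdivision G).Adj (Sum.inl u) (Sum.inl v) ↔ False := Iff.rfl
@[simp] lemma subdivision_adj_inl_inr (u : V) (e : G.edgeSet) :
    (subdivision G).Adj (Sum.inl u) (Sum.inr e) ↔ u ∈ (e : Sym2 V) := Iff.rfl
@[simp] lemma subdivision_adj_inr_inl (u : V) (e : G.edgeSet) :
    (subdivision G).Adj (Sum.inr e) (Sum.inl u) ↔ u ∈ (e : Sym2 V) := Iff.rfl
@[simp] lemma subdivision_adj_inr_inr (e f : G.edgeSet) :
    (subdivision G).Adj (Sum.inr e) (Sum.inr f) ↔ False := Iff.rfl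

@[simp] lemma triangulation_adj_inl_inl (u v : V) :
    (triangulation G).Adj (Sum.inl u) (Sum.inl v) ↔ G.Adj u v := Iff.rfl
@[simp] lemma triangulation_adj_inl_inr (u : V) (e : G.edgeSet) :
    (triangulation G).Adj (Sum.inl u) (Sum.inr e) ↔ u ∈ (e : Sym2 V) := Iff.rfl
@[simp] lemma triangulation_adj_inr_inl (u : V) (e : G.edgeSet) :
    (triangulation G).Adj (Sum.inr e) (Sum.inl u) ↔ u ∈ (e : Sym2 V) := Iff.rfl
@[simp] lemma triangulation_adj_inr_inr (e f : G.edgeSet) :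
    (triangulation G).Adj (Sum.inr e) (Sum.inr f) ↔ False := Iff.rfl

lemma subdivision_le_triangulation : subdivision G ≤ triangulation G := by
  rintro (u | e) (v | f) h
  · exact absurd h (by simp)
  · exact h
  · exact h
  · exact h

lemma subdivision_connected (hconn : G.Connected) : (subdivision G).Connected := by
  have hne : Nonempty (V ⊕ G.edgeSet) := ⟨Sum.inl hconn.nonempty.some⟩
  rw [SimpleGraph.connected_iff]
  refine ⟨?_, hne⟩
  have walkkey : ∀ {u v : V}, G.Walk u v →
      (subdivision G).Reachable (Sum.inl u) (Sum.inl v) := by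
    intro u v w
    induction w with
    | nil => exact SimpleGraph.Reachable.refl _
    | @cons a b c h p ih =>
      have he : s(a, b) ∈ G.edgeSet := h
      have h1 : (subdivision G).Adj (Sum.inl a) (Sum.inr ⟨s(a, b), he⟩) :=
        Sym2.mem_mk_left a b
      have h2 : (subdivision G).Adj (Sum.inr ⟨s(a, b), he⟩) (Sum.inl b) :=
        Sym2.mem_mk_right a b
      exact (h1.reachable.trans h2.reachable).trans ih
  have key : ∀ (u : V) (x : V ⊕ G.edgeSet),
      (subdivision G).Reachable x (Sum.inl u) := by
    rintro u (v | e)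
    · exact (hconn.preconnected v u).elim fun w => walkkey w
    · have hmem : (↑e : Sym2 V).out.1 ∈ (e : Sym2 V) := Sym2.out_fst_mem _
      have h1 : (subdivision G).Adj (Sum.inr e) (Sum.inl (↑e : Sym2 V).out.1) := hmem
      exact h1.reachable.trans
        ((hconn.preconnected _ u).elim fun w => walkkey w)
  intro x y
  exact (key hconn.nonempty.some x).trans (key hconn.nonempty.some y).symm

lemma triangulation_connected (hconn : G.Connected) : (triangulation G).Connected :=
  (subdivision_connected G hconn).mono (subdivision_le_triangulation G)

variable [Fintype V] [DecidableRel G.Adj]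

lemma lap_apply {W : Type*} [Fintype W] [DecidableEq W] (H : SimpleGraph W)
    [DecidableRel H.Adj] (x y : W) :
    H.lapMatrix ℝ x y
      = (if x = y then (H.degree x : ℝ) else 0) - (if H.Adj x y then 1 else 0) := by
  simp [SimpleGraph.lapMatrix, SimpleGraph.degMatrix, Matrix.sub_apply,
    Matrix.diagonal_apply, SimpleGraph.adjMatrix_apply]

lemma sum_ite_mem_edge (e : G.edgeSet) :
    ∑ u : V, (if u ∈ (e : Sym2 V) then (1 : ℝ) else 0) = 2 := by
  rcases e with ⟨e, he⟩
  revert he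
  induction e using Sym2.ind with
  | _ a b =>
    intro he
    have hab : a ≠ b := G.ne_of_adj (G.mem_edgeSet.mp he)
    have hrw : ∀ u : V, (if u ∈ (s(a,b) : Sym2 V) then (1:ℝ) else 0)
        = (if u = a then (1:ℝ) else 0) + (if u = b then 1 else 0) := by
      intro u
      by_cases ha : u = a <;> by_cases hb : u = b <;>
        simp_all [Sym2.mem_iff]
    calc ∑ u : V, (if u ∈ ((⟨s(a,b), he⟩ : G.edgeSet) : Sym2 V) then (1:ℝ) else 0)
        = ∑ u : V, ((if u = a then (1:ℝ) else 0) + (if u = b then 1 else 0)) :=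
          Finset.sum_congr rfl fun u _ => hrw u
      _ = 2 := by
          rw [Finset.sum_add_distrib, Finset.sum_ite_eq' Finset.univ a fun _ => (1:ℝ),
            Finset.sum_ite_eq' Finset.univ b fun _ => (1:ℝ)]
          norm_num

lemma sum_edges_mem (u : V) :
    ∑ e : G.edgeSet, (if u ∈ (e : Sym2 V) then (1 : ℝ) else 0) = G.degree u := by
  rw [← Finset.sum_subtype G.edgeFinset (fun x => G.mem_edgeFinset) 
    (fun e => if u ∈ e then (1:ℝ) else 0)]
  rw [Finset.sum_boole]
  rw [← SimpleGraph.incidenceFinset_eq_filter, SimpleGraph.card_incidenceFinset_eq_degree]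

lemma sum_edges_mem_two (u v : V) :
    ∑ e : G.edgeSet,
        (if u ∈ (e : Sym2 V) then (1 : ℝ) else 0) * (if v ∈ (e : Sym2 V) then 1 else 0)
      = (if u = v then (G.degree u : ℝ) else 0) + (if G.Adj u v then 1 else 0) := by
  by_cases huv : u = v
  · subst huv
    simp only [if_pos rfl, G.irrefl, if_false, add_zero, ite_mul, one_mul, zero_mul]
    rw [← sum_edges_mem G u]
    apply Finset.sum_congr rfl
    intro e _
    by_cases h : u ∈ (e : Sym2 V) <;> simp [h]
  · have hrw : ∀ e : G.edgeSet,
        (if u ∈ (e : Sym2 V) then (1:ℝ) else 0) * (if v ∈ (e : Sym2 V) then 1 else 0)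
          = if (e : Sym2 V) = s(u,v) then 1 else 0 := by
      intro e
      by_cases h1 : u ∈ (e : Sym2 V) <;> by_cases h2 : v ∈ (e : Sym2 V)
      · have he : (e : Sym2 V) = s(u,v) := (Sym2.mem_and_mem_iff huv).1 ⟨h1, h2⟩
        simp [h1, h2, he]
      · have he : ¬((e : Sym2 V) = s(u,v)) := fun hh => h2 (hh ▸ Sym2.mem_mk_right u v)
        simp [h1, h2, he]
      · have he : ¬((e : Sym2 V) = s(u,v)) := fun hh => h1 (hh ▸ Sym2.mem_mk_left u v)
        simp [h1, h2, he]
      · have he : ¬((e : Sym2 V) = s(u,v)) := fun hh => h1 (hh ▸ Sym2.mem_mk_left u v)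
        simp [h1, h2, he]
    rw [Finset.sum_congr rfl fun e _ => hrw e]
    rw [← Finset.sum_subtype G.edgeFinset (fun x => G.mem_edgeFinset)
      (fun e => if e = s(u,v) then (1:ℝ) else 0)]
    rw [Finset.sum_ite_eq' G.edgeFinset (s(u,v)) fun _ => (1:ℝ)]
    simp [huv, SimpleGraph.mem_edgeFinset, SimpleGraph.mem_edgeSet]

lemma deg_S_inl (u : V) : ((subdivision G).degree (Sum.inl u) : ℝ) = G.degree u := by
  rw [SimpleGraph.degree_eq_sum_if_adj, Fintype.sum_sum_type]
  simp only [subdivision_adj_inl_inl, subdivision_adj_inl_inr, if_false,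
    Finset.sum_const_zero, zero_add]
  exact sum_edges_mem G u

lemma deg_S_inr (e : G.edgeSet) : ((subdivision G).degree (Sum.inr e) : ℝ) = 2 := by
  rw [SimpleGraph.degree_eq_sum_if_adj, Fintype.sum_sum_type]
  simp only [subdivision_adj_inr_inl, subdivision_adj_inr_inr, if_false,
    Finset.sum_const_zero, add_zero]
  exact sum_ite_mem_edge G e

lemma deg_T_inl (u : V) : ((triangulation G).degree (Sum.inl u) : ℝ) = 2 * G.degree u := by
  rw [SimpleGraph.degree_eq_sum_if_adj, Fintype.sum_sum_type]
  simp only [triangulation_adj_inl_inl, triangulation_adj_inl_inr]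
  rw [sum_edges_mem G u,
    show (∑ x : V, if G.Adj u x then (1:ℝ) else 0) = (G.degree u : ℝ) from
      (G.degree_eq_sum_if_adj u).symm]
  ring

lemma deg_T_inr (e : G.edgeSet) : ((triangulation G).degree (Sum.inr e) : ℝ) = 2 := by
  rw [SimpleGraph.degree_eq_sum_if_adj, Fintype.sum_sum_type]
  simp only [triangulation_adj_inr_inl, triangulation_adj_inr_inr, if_false,
    Finset.sum_const_zero, add_zero]
  exact sum_ite_mem_edge G e


lemma LS_ll (u v : V) : (subdivision G).lapMatrix ℝ (Sum.inl u) (Sum.inl v)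
    = if u = v then (G.degree u : ℝ) else 0 := by
  rw [lap_apply]
  simp only [subdivision_adj_inl_inl, if_false, sub_zero, Sum.inl.injEq]
  by_cases h : u = v
  · subst h; rw [if_pos rfl, if_pos rfl, deg_S_inl]
  · rw [if_neg h, if_neg (by simpa using h)]

lemma LS_lr (u : V) (f : G.edgeSet) : (subdivision G).lapMatrix ℝ (Sum.inl u) (Sum.inr f)
    = -(if u ∈ (f : Sym2 V) then 1 else 0) := by
  rw [lap_apply]
  simp [subdivision_adj_inl_inr]

lemma LS_rl (e : G.edgeSet) (v : V) : (subdivision G).lapMatrix ℝ (Sum.inr e) (Sum.inl v)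
    = -(if v ∈ (e : Sym2 V) then 1 else 0) := by
  rw [lap_apply]
  simp [subdivision_adj_inr_inl]

lemma LS_rr (e f : G.edgeSet) : (subdivision G).lapMatrix ℝ (Sum.inr e) (Sum.inr f)
    = if e = f then 2 else 0 := by
  rw [lap_apply]
  simp only [subdivision_adj_inr_inr, if_false, sub_zero, Sum.inr.injEq]
  by_cases h : e = f
  · subst h; rw [if_pos rfl, if_pos rfl, deg_S_inr]
  · rw [if_neg (by simpa using h), if_neg h]

/-- diagonal 0/1 matrix marking the new vertices -/
noncomputable def Ed : Matrix (V ⊕ G.edgeSet) (V ⊕ G.edgeSet) ℝ :=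
  Matrix.diagonal (Sum.elim (fun _ => 0) (fun _ => 1))

lemma ELE : Ed G * ((subdivision G).lapMatrix ℝ * Ed G) = (2:ℝ) • Ed G := by
  ext x y
  rw [← Matrix.mul_assoc, Ed, Matrix.mul_diagonal, Matrix.diagonal_mul]
  rcases x with u | e <;> rcases y with v | f <;>
    simp only [Sum.elim_inl, Sum.elim_inr, Matrix.smul_apply, Matrix.diagonal_apply,
      smul_eq_mul]
  · simp
  · simp
  · simp
  · rw [LS_rr]
    by_cases h : e = f
    · subst h; simp
    · simp [h, Sum.inr.injEq]

lemma lapT_eq : (triangulation G).lapMatrix ℝ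
    = (3:ℝ) • (subdivision G).lapMatrix ℝ
      - (subdivision G).lapMatrix ℝ * (Ed G * (subdivision G).lapMatrix ℝ) := by
  ext x y
  have hent : ((subdivision G).lapMatrix ℝ * (Ed G * (subdivision G).lapMatrix ℝ)) x y
      = ∑ e : G.edgeSet, (subdivision G).lapMatrix ℝ x (Sum.inr e)
          * (subdivision G).lapMatrix ℝ (Sum.inr e) y := by
    rw [← Matrix.mul_assoc, Matrix.mul_assoc, Matrix.mul_apply]
    rw [Fintype.sum_sum_type]
    have h0 : ∀ w : V, (subdivision G).lapMatrix ℝ x (Sum.inl w)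
        * (Ed G * (subdivision G).lapMatrix ℝ) (Sum.inl w) y = 0 := by
      intro w
      rw [Ed, Matrix.diagonal_mul]
      simp
    rw [Finset.sum_congr rfl fun w _ => h0 w]
    simp only [Finset.sum_const_zero, zero_add]
    apply Finset.sum_congr rfl
    intro e _
    rw [Ed, Matrix.diagonal_mul]
    simp
  rw [Matrix.sub_apply, Matrix.smul_apply, hent, smul_eq_mul]
  rcases x with u | e <;> rcases y with v | f
  · rw [lap_apply]
    simp only [triangulation_adj_inl_inl, Sum.inl.injEq]
    have : ∀ e : G.edgeSet, (subdivision G).lapMatrix ℝ (Sum.inl u) (Sum.inr e)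
        * (subdivision G).lapMatrix ℝ (Sum.inr e) (Sum.inl v)
        = (if u ∈ (e : Sym2 V) then (1:ℝ) else 0) * (if v ∈ (e : Sym2 V) then 1 else 0) := by
      intro e; rw [LS_lr, LS_rl]; ring
    rw [Finset.sum_congr rfl fun e _ => this e, sum_edges_mem_two, LS_ll]
    by_cases h : u = v
    · subst h; rw [deg_T_inl]; simp; ring
    · simp [h]
  · rw [lap_apply]
    simp only [triangulation_adj_inl_inr, Sum.inl.injEq, reduceCtorEq, if_false, zero_sub]
    have : ∀ e : G.edgeSet, (subdivision G).lapMatrix ℝ (Sum.inl u) (Sum.inr e)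
        * (subdivision G).lapMatrix ℝ (Sum.inr e) (Sum.inr f)
        = if e = f then -(if u ∈ (f : Sym2 V) then (1:ℝ) else 0) * 2 else 0 := by
      intro e
      rw [LS_lr, LS_rr]
      by_cases h : e = f
      · subst h; simp
      · simp [h]
    rw [Finset.sum_congr rfl fun e _ => this e,
      Finset.sum_ite_eq' Finset.univ f fun _ => -(if u ∈ (f : Sym2 V) then (1:ℝ) else 0) * 2,
      LS_lr]
    simp only [Finset.mem_univ, if_true]
    ring
  · rw [lap_apply]
    simp only [triangulation_adj_inr_inl, Sum.inr.injEq, reduceCtorEq, if_false, zero_sub]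
    have : ∀ g : G.edgeSet, (subdivision G).lapMatrix ℝ (Sum.inr e) (Sum.inr g)
        * (subdivision G).lapMatrix ℝ (Sum.inr g) (Sum.inl v)
        = if g = e then -(if v ∈ (e : Sym2 V) then (1:ℝ) else 0) * 2 else 0 := by
      intro g
      rw [LS_rr, LS_rl]
      by_cases h : g = e
      · subst h; simp
      · have h' : ¬ e = g := fun hh => h hh.symm
        simp [h, h']
    rw [Finset.sum_congr rfl fun g _ => this g,
      Finset.sum_ite_eq' Finset.univ e fun _ => -(if v ∈ (e : Sym2 V) then (1:ℝ) else 0) * 2,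
      LS_rl]
    simp only [Finset.mem_univ, if_true]
    ring
  · rw [lap_apply]
    simp only [triangulation_adj_inr_inr, if_false, sub_zero, Sum.inr.injEq]
    have : ∀ g : G.edgeSet, (subdivision G).lapMatrix ℝ (Sum.inr e) (Sum.inr g)
        * (subdivision G).lapMatrix ℝ (Sum.inr g) (Sum.inr f)
        = if g = e then (if e = f then (4:ℝ) else 0) else 0 := by
      intro g
      rw [LS_rr, LS_rr]
      by_cases h : g = e
      · subst h
        by_cases h2 : g = f
        · subst h2; simp; norm_num
        · have h2' : ¬ f = g := fun hh => h2 hh.symm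
          simp [h2, h2']
      · have h' : ¬ e = g := fun hh => h hh.symm
        by_cases h2 : g = f
        · subst h2; simp [h, h']
        · simp [h, h', h2]
    rw [Finset.sum_congr rfl fun g _ => this g,
      Finset.sum_ite_eq' Finset.univ e fun _ => (if e = f then (4:ℝ) else 0), LS_rr]
    by_cases h : e = f
    · subst h; rw [deg_T_inr]; simp; ring
    · simp [h]



lemma Ed_ll (u v : V) : Ed G (Sum.inl u) (Sum.inl v) = 0 := by
  by_cases h : u = v
  · subst h; simp [Ed, Matrix.diagonal_apply]
  · simp [Ed, Matrix.diagonal_apply, h]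

lemma Ed_rl (e : G.edgeSet) (v : V) : Ed G (Sum.inr e) (Sum.inl v) = 0 := by
  simp [Ed, Matrix.diagonal_apply]

lemma Ed_rr (e f : G.edgeSet) :
    Ed G (Sum.inr e) (Sum.inr f) = if e = f then 1 else 0 := by
  by_cases h : e = f
  · subst h; simp [Ed, Matrix.diagonal_apply]
  · simp [Ed, Matrix.diagonal_apply, h]

lemma JE_apply (x y : V ⊕ G.edgeSet) :
    (Jmat (V ⊕ G.edgeSet) * Ed G) x y
      = Sum.elim (fun _ => (0:ℝ)) (fun _ => 1) y := by
  rw [Ed, Matrix.mul_diagonal]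
  simp [Jmat]

lemma EJ_apply (x y : V ⊕ G.edgeSet) :
    (Ed G * Jmat (V ⊕ G.edgeSet)) x y
      = Sum.elim (fun _ => (0:ℝ)) (fun _ => 1) x := by
  rw [Ed, Matrix.diagonal_mul]
  simp [Jmat]

lemma JEJ : Jmat (V ⊕ G.edgeSet) * (Ed G * Jmat (V ⊕ G.edgeSet))
    = (Fintype.card G.edgeSet : ℝ) • Jmat (V ⊕ G.edgeSet) := by
  ext x y
  rw [Matrix.mul_apply]
  have : ∀ z : V ⊕ G.edgeSet,
      Jmat (V ⊕ G.edgeSet) x z * (Ed G * Jmat (V ⊕ G.edgeSet)) z y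
        = Sum.elim (fun _ => (0:ℝ)) (fun _ => 1) z := by
    intro z
    rw [EJ_apply]
    simp [Jmat]
  rw [Finset.sum_congr rfl fun z _ => this z, Fintype.sum_sum_type]
  simp only [Sum.elim_inl, Sum.elim_inr, Finset.sum_const_zero, Finset.sum_const,
    nsmul_eq_mul, mul_one, zero_add, Matrix.smul_apply, Jmat, Matrix.of_apply,
    smul_eq_mul, Fintype.card]

end GraphLemmas

/-- A bundled finite simple graph (with decidable adjacency), used for iterating
the subdivision and triangulation constructions. -/
structure FGraph where
  V : Type*
  [fV : Fintype V]
  [dV : DecidableEq V]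
  G : SimpleGraph V
  [dG : DecidableRel G.Adj]

attribute [instance] FGraph.fV FGraph.dV FGraph.dG

/-- Subdivision, as an operation on bundled graphs. -/
def FGraph.subdiv (H : FGraph) : FGraph := { V := H.V ⊕ H.G.edgeSet, G := subdivision H.G }

/-- Triangulation, as an operation on bundled graphs. -/
def FGraph.triang (H : FGraph) : FGraph := { V := H.V ⊕ H.G.edgeSet, G := triangulation H.G }

/-- Kirchhoff index of a bundled graph. -/
noncomputable def FGraph.R (H : FGraph) : ℝ := kirchhoffIndex H.G

/-- Additive degree-Kirchhoff index of a bundled graph. -/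
noncomputable def FGraph.Rplus (H : FGraph) : ℝ := addDegKirchhoffIndex H.G

/-- Multiplicative degree-Kirchhoff index of a bundled graph. -/
noncomputable def FGraph.Rstar (H : FGraph) : ℝ := mulDegKirchhoffIndex H.G

theorem statement_13 {V : Type*} [Fintype V] [DecidableEq V]
    (G : SimpleGraph V) [DecidableRel G.Adj] (n m : ℕ)
    (hn : Fintype.card V = n) (hm : G.edgeFinset.card = m)
    (hconn : G.Connected) (hn2 : 2 ≤ n) :
    ∀ (i : G.edgeSet) (j : V),
      resistanceDistance (triangulation G) (Sum.inr i) (Sum.inl j) =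
        (1 / 3) * resistanceDistance (subdivision G) (Sum.inr i) (Sum.inl j) + 1 / 3 := by
  intro i j
  have hSconn := subdivision_connected G hconn
  have hTconn := triangulation_connected G hconn
  set L := (subdivision G).lapMatrix ℝ with hLdef
  set J := Jmat (V ⊕ G.edgeSet) with hJdef
  set E := Ed G with hEdef
  set N := (Mmat (subdivision G))⁻¹ with hNdef
  have ht : (Fintype.card (V ⊕ G.edgeSet) : ℝ) ≠ 0 := card_ne_zero _ hSconn
  set t := (Fintype.card (V ⊕ G.edgeSet) : ℝ) with htdef
  set mE := (Fintype.card G.edgeSet : ℝ) with hmEdef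
  set c := t⁻¹ with hcdef
  have hct : c * t = 1 := inv_mul_cancel₀ ht
  have hLN : L * N = 1 - c • J := lap_mul_Minv _ hSconn
  have hJN : J * N = J := Jmat_mul_Minv _ hSconn
  have hLJ : L * J = 0 := lap_mul_Jmat _
  have hJJ : J * J = t • J := Jmat_mul_Jmat
  have hELE : E * (L * E) = (2:ℝ) • E := ELE G
  have hJEJ : J * (E * J) = mE • J := JEJ G
  have hLJ' : ∀ X : Matrix (V ⊕ G.edgeSet) (V ⊕ G.edgeSet) ℝ, L * (J * X) = 0 := by
    intro X; rw [← Matrix.mul_assoc, hLJ, Matrix.zero_mul]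
  have hJJ' : ∀ X : Matrix (V ⊕ G.edgeSet) (V ⊕ G.edgeSet) ℝ, J * (J * X) = t • (J * X) := by
    intro X; rw [← Matrix.mul_assoc, hJJ, Matrix.smul_mul]
  have hELE' : ∀ X : Matrix (V ⊕ G.edgeSet) (V ⊕ G.edgeSet) ℝ,
      E * (L * (E * X)) = (2:ℝ) • (E * X) := by
    intro X
    calc E * (L * (E * X)) = (E * (L * E)) * X := by
          rw [Matrix.mul_assoc, Matrix.mul_assoc]
      _ = (2:ℝ) • (E * X) := by rw [hELE, Matrix.smul_mul]
  have hJEJ' : ∀ X : Matrix (V ⊕ G.edgeSet) (V ⊕ G.edgeSet) ℝ,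
      J * (E * (J * X)) = mE • (J * X) := by
    intro X
    calc J * (E * (J * X)) = (J * (E * J)) * X := by
          rw [Matrix.mul_assoc, Matrix.mul_assoc]
      _ = mE • (J * X) := by rw [hJEJ, Matrix.smul_mul]
  have hMT : Mmat (triangulation G) = (3:ℝ) • L - L * (E * L) + c • J := by
    rw [Mmat, lapT_eq G]
  clear_value t mE c
  set C := (3:ℝ)⁻¹ • N + (3:ℝ)⁻¹ • E - (c/3) • (J * E) - (c/3) • (E * J)
      + ((2*c + mE * c^2)/3) • J with hCdef
  have hone : Mmat (triangulation G) * C = 1 := by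
    rw [hMT, hCdef]
    simp only [Matrix.add_mul, Matrix.sub_mul, Matrix.mul_add, Matrix.mul_sub,
      Matrix.smul_mul, Matrix.mul_smul, Matrix.mul_assoc, hLN, hJN, hLJ, hLJ', hJJ, hJJ',
      hELE, hELE', hJEJ, hJEJ', smul_add, smul_sub, smul_smul, Matrix.mul_one,
      Matrix.mul_zero, Matrix.zero_mul, smul_zero, Matrix.one_mul]
    match_scalars <;> (try field_simp [hcdef]) <;> (try ring) <;> (subst hcdef; field_simp; ring)
  have hinv : (Mmat (triangulation G))⁻¹ = C := Matrix.inv_eq_right_inv hone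
  rw [resistanceDistance_eq _ hTconn, resistanceDistance_eq _ hSconn, hinv, hCdef]
  simp only [hNdef, hEdef, hJdef]
  simp only [Matrix.add_apply, Matrix.sub_apply, Matrix.smul_apply, smul_eq_mul,
    JE_apply, EJ_apply, Ed_rr, Ed_ll, Ed_rl, Sum.elim_inl, Sum.elim_inr, if_pos rfl]
  simp only [Jmat, Matrix.of_apply, if_true]
  ring

end KirchhoffPaper
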